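/- Let M' be a symmetric d×d real matrix with eigenvalues σ'₁,…,σ'_d and orthonormal eigenvectors v'₁,…,v'_d, and let 0 < k < d. The unique minimizer M of the Frobenius distance ‖M - M'‖_F over the set {M symmetric : 0 ⪯ M ⪯ I, tr M = k} has the same eigenvectors as M', with eigenvalues σᵢ = max(0, min(1, σ'ᵢ + S)) for some constant S ∈ ℝ chosen so that Σᵢ σᵢ = k. -/

import Mathlib

open Matrix

/-- Squared Frobenius norm `‖A‖_F² = tr (Aᵀ A)`. -/
noncomputable def frobSq {d : ℕ} (A : Matrix (Fin d) (Fin d) ℝ) : ℝ :=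
  (Aᵀ * A).trace

/-- The MSG feasible set (matrix capped simplex): `0 ⪯ M ⪯ I`, `tr M = k`. -/
def feasMSG (d k : ℕ) : Set (Matrix (Fin d) (Fin d) ℝ) :=
  {M | M.PosSemidef ∧ ((1 : Matrix (Fin d) (Fin d) ℝ) - M).PosSemidef ∧
    M.trace = (k : ℝ)}

lemma frobSq_eq_sum {d : ℕ} (A : Matrix (Fin d) (Fin d) ℝ) :
    frobSq A = ∑ j, ∑ i, A i j ^ 2 := by
  simp [frobSq, Matrix.trace, Matrix.diag, Matrix.mul_apply, sq]

lemma frobSq_nonneg {d : ℕ} (A : Matrix (Fin d) (Fin d) ℝ) : 0 ≤ frobSq A := by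
  rw [frobSq_eq_sum]
  exact Finset.sum_nonneg fun j _ => Finset.sum_nonneg fun i _ => sq_nonneg _

lemma frobSq_eq_zero {d : ℕ} {A : Matrix (Fin d) (Fin d) ℝ} (h : frobSq A = 0) :
    A = 0 := by
  rw [frobSq_eq_sum] at h
  ext i j
  have h1 := (Finset.sum_eq_zero_iff_of_nonneg
    (fun j _ => Finset.sum_nonneg fun i _ => sq_nonneg (A i j))).mp h j (Finset.mem_univ j)
  have h2 := (Finset.sum_eq_zero_iff_of_nonneg
    (fun i _ => sq_nonneg (A i j))).mp h1 i (Finset.mem_univ i)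
  simpa using sq_eq_zero_iff.mp h2

lemma frobSq_add {d : ℕ} (B C : Matrix (Fin d) (Fin d) ℝ) :
    frobSq (B + C) = frobSq B + frobSq C + 2 * (Bᵀ * C).trace := by
  have h : (Cᵀ * B).trace = (Bᵀ * C).trace := by
    rw [← Matrix.trace_transpose (Cᵀ * B)]
    simp [Matrix.transpose_mul]
  simp only [frobSq, Matrix.transpose_add, add_mul, mul_add, Matrix.trace_add, h]
  ring

lemma psd_diag_nonneg {d : ℕ} {N : Matrix (Fin d) (Fin d) ℝ} (hN : N.PosSemidef)
    (i : Fin d) : 0 ≤ N i i := by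
  have := hN.dotProduct_mulVec_nonneg (Pi.single i 1)
  simpa [dotProduct, Matrix.mulVec, Pi.single_apply, Finset.sum_ite_eq,
    Finset.sum_ite_eq'] using this

/-- The Frobenius projection of a symmetric matrix `M' = V diag(σ') Vᵀ` onto the
matrix capped simplex has the same eigenvectors, with eigenvalues
`max(0, min(1, σ'ᵢ + S))` for a shift `S` making the eigenvalues sum to `k`;
this projection is the unique minimizer. -/
theorem stmt10 (d k : ℕ) (hk : 0 < k) (hkd : k < d)
    (V : Matrix (Fin d) (Fin d) ℝ) (hV : V * Vᵀ = 1) (σ' : Fin d → ℝ) :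
    ∃ S : ℝ,
      (∑ i, max 0 (min 1 (σ' i + S))) = (k : ℝ) ∧
      (V * Matrix.diagonal (fun i => max 0 (min 1 (σ' i + S))) * Vᵀ) ∈ feasMSG d k ∧
      ∀ N ∈ feasMSG d k,
        frobSq (V * Matrix.diagonal (fun i => max 0 (min 1 (σ' i + S))) * Vᵀ -
            V * Matrix.diagonal σ' * Vᵀ)
          ≤ frobSq (N - V * Matrix.diagonal σ' * Vᵀ) ∧
        (N ≠ V * Matrix.diagonal (fun i => max 0 (min 1 (σ' i + S))) * Vᵀ →
          frobSq (V * Matrix.diagonal (fun i => max 0 (min 1 (σ' i + S))) * Vᵀ -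
              V * Matrix.diagonal σ' * Vᵀ)
            < frobSq (N - V * Matrix.diagonal σ' * Vᵀ)) := by
  have hVt : Vᵀ * V = 1 := mul_eq_one_comm.mp hV
  -- existence of S by IVT
  set f : ℝ → ℝ := fun S => ∑ i, max 0 (min 1 (σ' i + S)) with hf
  have hcont : Continuous f := by
    rw [hf]
    exact continuous_finset_sum Finset.univ fun i _ =>
      (continuous_const.max (continuous_const.min (continuous_const.add continuous_id)) :
        Continuous fun S : ℝ => max 0 (min 1 (σ' i + S)))
  set C : ℝ := 1 + ∑ i, |σ' i| with hC
  have habs : ∀ i : Fin d, |σ' i| ≤ ∑ j, |σ' j| := fun i =>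
    Finset.single_le_sum (fun j _ => abs_nonneg (σ' j)) (Finset.mem_univ i)
  have hfa : f (-C) = 0 := by
    apply Finset.sum_eq_zero
    intro i _
    have h1 : σ' i + -C ≤ 0 := by
      have := habs i
      have := le_abs_self (σ' i)
      simp only [hC]; linarith
    rw [min_eq_right (h1.trans zero_le_one), max_eq_left h1]
  have hfb : f C = d := by
    simp only [hf]
    have : ∀ i ∈ Finset.univ, max 0 (min 1 (σ' i + C)) = 1 := by
      intro i _
      have h1 : (1:ℝ) ≤ σ' i + C := by
        have := habs i
        have := neg_abs_le (σ' i)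
        simp only [hC]; linarith
      rw [min_eq_left h1, max_eq_right zero_le_one]
    rw [Finset.sum_congr rfl this]
    simp
  have hmem : (k:ℝ) ∈ Set.Icc (f (-C)) (f C) := by
    rw [hfa, hfb]
    constructor
    · exact_mod_cast Nat.zero_le k
    · exact_mod_cast hkd.le
  have hC0 : (0:ℝ) ≤ C := by
    have := Finset.sum_nonneg (fun i (_ : i ∈ Finset.univ) => abs_nonneg (σ' i))
    simp only [hC]; linarith
  obtain ⟨S, _, hS⟩ := intermediate_value_Icc
    (by linarith : -C ≤ C) hcont.continuousOn hmem
  refine ⟨S, hS, ?_, ?_⟩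
  all_goals
    set σ : Fin d → ℝ := fun i => max 0 (min 1 (σ' i + S)) with hσ
  · -- feasibility
    have h01 : ∀ i, 0 ≤ σ i ∧ σ i ≤ 1 := fun i =>
      ⟨le_max_left _ _, max_le (zero_le_one) (min_le_left _ _)⟩
    refine ⟨?_, ?_, ?_⟩
    · have := (Matrix.PosSemidef.diagonal (fun i => (h01 i).1)).mul_mul_conjTranspose_same V
      simpa using this
    · have h1 : (1 : Matrix (Fin d) (Fin d) ℝ) - V * Matrix.diagonal σ * Vᵀ
          = V * Matrix.diagonal (fun i => 1 - σ i) * Vᵀ := by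
        have : (Matrix.diagonal (fun i => 1 - σ i) : Matrix (Fin d) (Fin d) ℝ)
            = 1 - Matrix.diagonal σ := by
          rw [← Matrix.diagonal_one, ← Matrix.diagonal_sub]
        rw [this, Matrix.mul_sub, Matrix.mul_one, Matrix.sub_mul, hV]
      rw [h1]
      have := (Matrix.PosSemidef.diagonal
        (fun i => by linarith [(h01 i).2] : ∀ i, (0:ℝ) ≤ 1 - σ i)).mul_mul_conjTranspose_same V
      simpa using this
    · rw [Matrix.trace_mul_comm, ← Matrix.mul_assoc, hVt, Matrix.one_mul,
        Matrix.trace_diagonal]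
      exact hS
  · -- optimality
    intro N hN
    set M : Matrix (Fin d) (Fin d) ℝ := V * Matrix.diagonal σ * Vᵀ with hM
    set M' : Matrix (Fin d) (Fin d) ℝ := V * Matrix.diagonal σ' * Vᵀ with hM'
    obtain ⟨hNpsd, hNle, hNtr⟩ := hN
    have hNsym : Nᵀ = N := by
      have := hNpsd.1
      rwa [Matrix.IsHermitian, Matrix.conjTranspose_eq_transpose_of_trivial] at this
    -- the key inner product inequality
    have hMsym : Mᵀ = M := by
      rw [hM]
      simp [Matrix.transpose_mul, Matrix.mul_assoc, Matrix.diagonal_transpose]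
    have hkey : 0 ≤ ((N - M)ᵀ * (M - M')).trace := by
      have hMM' : M - M' = V * Matrix.diagonal (fun i => σ i - σ' i) * Vᵀ := by
        have hd : Matrix.diagonal (fun i => σ i - σ' i)
            = Matrix.diagonal σ - Matrix.diagonal σ' := by
          ext i j
          by_cases h : i = j <;> simp [Matrix.diagonal_apply, h]
        rw [hM, hM', hd, Matrix.mul_sub, Matrix.sub_mul]
      have htr : ((N - M)ᵀ * (M - M')).trace
          = ∑ i, ((Vᵀ * (N - M) * V) i i) * (σ i - σ' i) := by
        rw [Matrix.transpose_sub, hNsym, hMsym, hMM']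
        rw [show (N - M) * (V * Matrix.diagonal (fun i => σ i - σ' i) * Vᵀ)
            = ((N - M) * V * Matrix.diagonal (fun i => σ i - σ' i)) * Vᵀ by
          simp [Matrix.mul_assoc]]
        rw [Matrix.trace_mul_comm, ← Matrix.mul_assoc, ← Matrix.mul_assoc]
        simp [Matrix.trace, Matrix.diag, Matrix.mul_diagonal]
      rw [htr]
      set A : Matrix (Fin d) (Fin d) ℝ := Vᵀ * N * V with hA
      have hconj : ∀ i, (Vᵀ * (N - M) * V) i i = A i i - σ i := by
        intro i
        have : Vᵀ * (N - M) * V = A - Matrix.diagonal σ := by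
          rw [Matrix.mul_sub, Matrix.sub_mul, hA, hM]
          congr 1
          rw [show Vᵀ * (V * Matrix.diagonal σ * Vᵀ) * V
              = (Vᵀ * V) * Matrix.diagonal σ * (Vᵀ * V) by simp [Matrix.mul_assoc], hVt]
          simp
        rw [this]
        simp [Matrix.sub_apply, Matrix.diagonal_apply_eq]
      -- A is feasible in diagonal sense
      have hApsd : A.PosSemidef := by
        have := hNpsd.conjTranspose_mul_mul_same V
        simpa using this
      have hA1psd : ((1 : Matrix (Fin d) (Fin d) ℝ) - A).PosSemidef := by
        have h1 : (1 : Matrix (Fin d) (Fin d) ℝ) - A = Vᵀ * (1 - N) * V := by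
          rw [Matrix.mul_sub, Matrix.sub_mul, Matrix.mul_one, hA, hVt]
        rw [h1]
        have := hNle.conjTranspose_mul_mul_same V
        simpa using this
      have hAtr : A.trace = (k:ℝ) := by
        rw [hA, Matrix.trace_mul_cycle, hV, Matrix.one_mul, hNtr]
      have hAd : ∀ i, 0 ≤ A i i ∧ A i i ≤ 1 := by
        intro i
        refine ⟨psd_diag_nonneg hApsd i, ?_⟩
        have := psd_diag_nonneg hA1psd i
        simp only [Matrix.sub_apply, Matrix.one_apply_eq] at this
        linarith
      -- split σ i - σ' i = r i + S
      have hsplit : ∀ i, (A i i - σ i) * (σ i - σ' i)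
          = (A i i - σ i) * (σ i - (σ' i + S)) + (A i i - σ i) * S := by
        intro i; ring
      have hσsum : ∑ i, σ i = (k:ℝ) := hS
      have hsum : ∑ i, (A i i - σ i) * S = 0 := by
        rw [← Finset.sum_mul, Finset.sum_sub_distrib]
        have hAsum : (∑ i, A i i) = (k:ℝ) := by
          rw [← hAtr]; rfl
        rw [hAsum, hσsum, sub_self, zero_mul]
      have hptw : ∀ i, 0 ≤ (A i i - σ i) * (σ i - (σ' i + S)) := by
        intro i
        obtain ⟨ha0, ha1⟩ := hAd i
        set t := σ' i + S with ht
        rcases le_total t 0 with h | h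
        · have : σ i = 0 := by
            rw [hσ]
            simp only
            rw [min_eq_right (h.trans zero_le_one), max_eq_left h]
          rw [this]
          nlinarith
        · rcases le_total t 1 with h1 | h1
          · have : σ i = t := by
              rw [hσ]; simp only
              rw [min_eq_right h1, max_eq_right h]
            rw [this]
            simp
          · have : σ i = 1 := by
              rw [hσ]; simp only
              rw [min_eq_left h1, max_eq_right zero_le_one]
            rw [this]
            nlinarith
      calc (0:ℝ) ≤ ∑ i, (A i i - σ i) * (σ i - (σ' i + S)) :=
            Finset.sum_nonneg fun i _ => hptw i
        _ = ∑ i, (A i i - σ i) * (σ i - (σ' i + S)) + ∑ i, (A i i - σ i) * S := by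
            rw [hsum]; ring
        _ = ∑ i, (A i i - σ i) * (σ i - σ' i) := by
            rw [← Finset.sum_add_distrib]
            exact Finset.sum_congr rfl fun i _ => (hsplit i).symm
        _ = ∑ i, ((Vᵀ * (N - M) * V) i i) * (σ i - σ' i) := by
            exact Finset.sum_congr rfl fun i _ => by rw [hconj i]
    -- Pythagoras
    have hdecomp : frobSq (N - M') = frobSq (N - M) + frobSq (M - M')
        + 2 * ((N - M)ᵀ * (M - M')).trace := by
      have : N - M' = (N - M) + (M - M') := by abel
      rw [this, frobSq_add]
    constructor
    · rw [hdecomp]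
      have := frobSq_nonneg (N - M)
      linarith
    · intro hne
      rw [hdecomp]
      have hpos : 0 < frobSq (N - M) := by
        rcases lt_or_eq_of_le (frobSq_nonneg (N - M)) with h | h
        · exact h
        · exfalso
          apply hne
          have := frobSq_eq_zero h.symm
          rw [sub_eq_zero] at this
          exact this
      linarith
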